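/- arXiv:1708.07580 — 7 statements merged into one kernel-verified Lean document; each statement's English description precedes it below -/
import Mathlib

section
/- For any real number q > 0 and any profile of linear orders, a committee W of size k satisfies generalised q-PSC if and only if it satisfies q-PSC. -/
variable {V C : Type*}

/-- Strict part of a weak preference relation. -/
def StrictPref (R : C → C → Prop) (a b : C) : Prop :=
  R a b ∧ ¬ R b a

/-- A complete and transitive preference relation (total preorder). -/
def TotalPreorderRel (R : C → C → Prop) : Prop :=
  Total R ∧ Transitive R

/-- A linear order (strict preferences): complete, transitive and antisymmetric. -/
def LinearPrefRel (R : C → C → Prop) : Prop :=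
  Total R ∧ Transitive R ∧ ∀ a b : C, R a b → R b a → a = b

/-- A dichotomous preference: a total preorder with at most two indifference classes
(equivalently, no strict chain of length three). -/
def DichotomousPref (R : C → C → Prop) : Prop :=
  TotalPreorderRel R ∧ ∀ a b c : C, StrictPref R a b → ¬ StrictPref R b c

/-- `N'` is a solid coalition for `C'`: every voter in `N'` strictly prefers every
candidate in `C'` to every candidate outside `C'`. -/
def SolidCoalition (R : V → C → C → Prop) (N' : Finset V) (C' : Finset C) : Prop :=
  ∀ i ∈ N', ∀ c' ∈ C', ∀ c : C, c ∉ C' → StrictPref (R i) c' c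

/-- `N'` is a generalised solid coalition for `C'`: every voter in `N'` weakly prefers
every candidate in `C'` to every candidate outside `C'`. -/
def GenSolidCoalition (R : V → C → C → Prop) (N' : Finset V) (C' : Finset C) : Prop :=
  ∀ i ∈ N', ∀ c' ∈ C', ∀ c : C, c ∉ C' → R i c' c

/-- Candidate `c` is within voter `i`'s top `t` positions:
fewer than `t` candidates are strictly preferred to `c`. -/
def WithinTop (R : C → C → Prop) (c : C) (t : ℕ) : Prop :=
  ({d : C | StrictPref R d c}).ncard < t

/-- `W` satisfies q-PSC. -/
def QPSC [DecidableEq C] (R : V → C → C → Prop) (W : Finset C) (q : ℝ) : Prop :=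
  ∀ ℓ : ℕ, 0 < ℓ → ∀ N' : Finset V, ∀ C' : Finset C,
    SolidCoalition R N' C' → (ℓ : ℝ) * q ≤ (N'.card : ℝ) →
    min ℓ C'.card ≤ (W ∩ C').card

/-- `W` satisfies weak q-PSC. -/
def WeakQPSC [DecidableEq C] (R : V → C → C → Prop) (W : Finset C) (q : ℝ) : Prop :=
  ∀ ℓ : ℕ, 0 < ℓ → ∀ N' : Finset V, ∀ C' : Finset C,
    C'.card ≤ ℓ → SolidCoalition R N' C' → (ℓ : ℝ) * q ≤ (N'.card : ℝ) →
    min ℓ C'.card ≤ (W ∩ C').card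

/-- `W` satisfies generalised q-PSC. -/
def GenQPSC (R : V → C → C → Prop) (W : Finset C) (q : ℝ) : Prop :=
  ∀ ℓ : ℕ, 0 < ℓ → ∀ N' : Finset V, ∀ C' : Finset C,
    GenSolidCoalition R N' C' → (ℓ : ℝ) * q ≤ (N'.card : ℝ) →
    ∃ C'' : Finset C, C'' ⊆ W ∧ min ℓ C'.card ≤ C''.card ∧
      ∀ c'' ∈ C'', ∃ i ∈ N', WithinTop (R i) c'' C'.card

/-- `W` satisfies generalised weak q-PSC. -/
def GenWeakQPSC (R : V → C → C → Prop) (W : Finset C) (q : ℝ) : Prop :=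
  ∀ ℓ : ℕ, 0 < ℓ → ∀ N' : Finset V, ∀ C' : Finset C,
    C'.card ≤ ℓ → GenSolidCoalition R N' C' → (ℓ : ℝ) * q ≤ (N'.card : ℝ) →
    ∃ C'' : Finset C, C'' ⊆ W ∧ min ℓ C'.card ≤ C''.card ∧
      ∀ c'' ∈ C'', ∃ i ∈ N', WithinTop (R i) c'' C'.card

/-- under linear orders, generalised q-PSC is equivalent to q-PSC. -/
theorem genQPSC_iff_qPSC_of_linear
    {V C : Type*} [Fintype V] [Fintype C] [DecidableEq C]
    (R : V → C → C → Prop) (hR : ∀ i : V, LinearPrefRel (R i))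
    (k : ℕ) (hk1 : 1 ≤ k) (hkm : k ≤ Fintype.card C)
    (W : Finset C) (hW : W.card = k)
    (q : ℝ) (hq : 0 < q) :
    GenQPSC R W q ↔ QPSC R W q := by
  constructor
  · -- GenQPSC → QPSC
    intro hgen ℓ hℓ N' C' hsolid hle
    obtain ⟨C'', hsub, hcard, htop⟩ := hgen ℓ hℓ N' C'
      (fun i hi c' hc' c hc => (hsolid i hi c' hc' c hc).1) hle
    have hsubC' : C'' ⊆ C' := by
      intro c'' hc''
      obtain ⟨i, hi, hwt⟩ := htop c'' hc''
      by_contra hnot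
      have hss : (C' : Set C) ⊆ {d : C | StrictPref (R i) d c''} := by
        intro d hd
        exact hsolid i hi d hd c'' hnot
      have := Set.ncard_le_ncard hss (Set.toFinite _)
      rw [Set.ncard_coe_finset] at this
      exact absurd hwt (not_lt.mpr this)
    calc min ℓ C'.card ≤ C''.card := hcard
      _ ≤ (W ∩ C').card := Finset.card_le_card (Finset.subset_inter hsub hsubC')
  · -- QPSC → GenQPSC
    intro hpsc ℓ hℓ N' C' hgsolid hle
    have hsolid : SolidCoalition R N' C' := by
      intro i hi c' hc' c hc
      have hne : c' ≠ c := fun h => hc (h ▸ hc')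
      refine ⟨hgsolid i hi c' hc' c hc, fun h => hne ((hR i).2.2 c' c (hgsolid i hi c' hc' c hc) h)⟩
    have hcard := hpsc ℓ hℓ N' C' hsolid hle
    have hNne : N'.Nonempty := by
      rw [← Finset.card_pos]
      have h1 : (0:ℝ) < (ℓ:ℝ) * q := mul_pos (Nat.cast_pos.mpr hℓ) hq
      exact_mod_cast lt_of_lt_of_le h1 hle
    obtain ⟨i, hi⟩ := hNne
    refine ⟨W ∩ C', Finset.inter_subset_left, hcard, ?_⟩
    intro c'' hc''
    have hcC' : c'' ∈ C' := (Finset.mem_inter.mp hc'').2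
    refine ⟨i, hi, ?_⟩
    have hss : {d : C | StrictPref (R i) d c''} ⊂ (C' : Set C) := by
      constructor
      · intro d hd
        by_contra hnot
        exact (hsolid i hi c'' hcC' d hnot).2 hd.1
      · intro habs
        exact (habs hcC').2 (habs hcC').1
    have := Set.ncard_lt_ncard hss (Set.toFinite _)
    rwa [Set.ncard_coe_finset] at this
end

section
/- For any real number q > 0 and any profile of linear orders, a committee W of size k satisfies generalised weak q-PSC if and only if it satisfies weak q-PSC. -/
variable {V C : Type*}

/-- under linear orders, generalised weak q-PSC is equivalent to
weak q-PSC. -/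
theorem genWeakQPSC_iff_weakQPSC_of_linear
    {V C : Type*} [Fintype V] [Fintype C] [DecidableEq C]
    (R : V → C → C → Prop) (hR : ∀ i : V, LinearPrefRel (R i))
    (k : ℕ) (hk1 : 1 ≤ k) (hkm : k ≤ Fintype.card C)
    (W : Finset C) (hW : W.card = k)
    (q : ℝ) (hq : 0 < q) :
    GenWeakQPSC R W q ↔ WeakQPSC R W q := by
  constructor
  · intro h ℓ hℓ N' C' hcard hsolid hq'
    have hgen : GenSolidCoalition R N' C' := fun i hi c' hc' c hc =>
      (hsolid i hi c' hc' c hc).1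
    obtain ⟨C'', hC''W, hC''card, hC''top⟩ := h ℓ hℓ N' C' hcard hgen hq'
    -- N' nonempty
    have hN' : N'.Nonempty := by
      rw [← Finset.card_pos]
      by_contra hc
      push_neg at hc
      interval_cases h' : N'.card
      · have : (ℓ : ℝ) * q > 0 := by positivity
        push_cast at hq'; linarith
    -- C'' ⊆ C'
    have hsub : C'' ⊆ W ∩ C' := by
      intro c hc
      rw [Finset.mem_inter]
      refine ⟨hC''W hc, ?_⟩
      obtain ⟨i, hi, htop⟩ := hC''top c hc
      by_contra hcC'
      have hsubset : (↑C' : Set C) ⊆ {d : C | StrictPref (R i) d c} := by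
        intro d hd
        exact hsolid i hi d hd c hcC'
      have : C'.card ≤ ({d : C | StrictPref (R i) d c}).ncard := by
        rw [← Set.ncard_coe_finset]
        exact Set.ncard_le_ncard hsubset (Set.toFinite _)
      exact absurd htop (by unfold WithinTop; omega)
    calc min ℓ C'.card ≤ C''.card := hC''card
      _ ≤ (W ∩ C').card := Finset.card_le_card hsub
  · intro h ℓ hℓ N' C' hcard hgen hq'
    -- gen solid → solid under linear orders
    have hsolid : SolidCoalition R N' C' := by
      intro i hi c' hc' c hc
      have h1 := hgen i hi c' hc' c hc
      refine ⟨h1, fun h2 => ?_⟩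
      exact hc (((hR i).2.2 c' c h1 h2) ▸ hc')
    have hmin := h ℓ hℓ N' C' hcard hsolid hq'
    have hN' : N'.Nonempty := by
      rw [← Finset.card_pos]
      by_contra hcn
      push_neg at hcn
      interval_cases h' : N'.card
      · have : (ℓ : ℝ) * q > 0 := by positivity
        push_cast at hq'; linarith
    obtain ⟨i, hi⟩ := hN'
    refine ⟨W ∩ C', Finset.inter_subset_left, hmin, ?_⟩
    intro c hc
    rw [Finset.mem_inter] at hc
    refine ⟨i, hi, ?_⟩
    have hsubset : {d : C | StrictPref (R i) d c} ⊆ (↑(C'.erase c) : Set C) := by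
      intro d hd
      simp only [Set.mem_setOf_eq] at hd
      simp only [Finset.coe_erase, Set.mem_diff, Finset.mem_coe,
        Set.mem_singleton_iff]
      constructor
      · by_contra hdC'
        exact hd.2 (hgen i hi c hc.2 d hdC')
      · rintro rfl
        exact hd.2 hd.1
    have h1 : ({d : C | StrictPref (R i) d c}).ncard ≤ (C'.erase c).card := by
      rw [← Set.ncard_coe_finset]
      exact Set.ncard_le_ncard hsubset (Set.toFinite _)
    have h2 : (C'.erase c).card < C'.card :=
      Finset.card_erase_lt_of_mem hc.2
    unfold WithinTop; omega
end

section
/- Under dichotomous preferences, if a committee W of size k satisfies generalised weak Hare-PSC (generalised weak q-PSC with q = n/k), then W satisfies PJR for the approval sets (A_1,…,A_n) derived from the preferences. -/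
variable {V C : Type*}

/-- Voter `i`'s approval set: her top indifference class. -/
def ApprovalSet (R : C → C → Prop) : Set C := {c : C | ∀ d : C, R c d}

/-- `W` (of size `k`) satisfies proportional justified representation. -/
def PJR [Fintype V] (R : V → C → C → Prop) (W : Finset C) (k : ℕ) : Prop :=
  ∀ ℓ : ℕ, 0 < ℓ → ℓ ≤ k →
    ¬ ∃ Nstar : Finset V,
      (ℓ : ℝ) * (Fintype.card V : ℝ) / (k : ℝ) ≤ (Nstar.card : ℝ) ∧
      ℓ ≤ (⋂ i ∈ Nstar, ApprovalSet (R i)).ncard ∧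
      ((⋃ i ∈ Nstar, ApprovalSet (R i)) ∩ (W : Set C)).ncard < ℓ

/-- under dichotomous preferences, generalised weak Hare-PSC
implies PJR. -/
theorem genWeakHarePSC_implies_PJR
    {V C : Type*} [Fintype V] [Fintype C] [DecidableEq C]
    (R : V → C → C → Prop) (hR : ∀ i : V, DichotomousPref (R i))
    (k : ℕ) (hk1 : 1 ≤ k) (hkm : k ≤ Fintype.card C)
    (W : Finset C) (hW : W.card = k)
    (hpsc : GenWeakQPSC R W ((Fintype.card V : ℝ) / (k : ℝ))) :
    PJR R W k := by
  intro ℓ hℓ hℓk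
  rintro ⟨Ns, hcard, hinter, hunion⟩
  classical
  set Aset : Set C := ⋂ i ∈ Ns, ApprovalSet (R i) with hA
  have hfin : Aset.Finite := Set.toFinite _
  have hcardA : ℓ ≤ hfin.toFinset.card := by
    rwa [← Set.ncard_eq_toFinset_card Aset hfin]
  obtain ⟨C', hC'sub, hC'card⟩ := Finset.exists_subset_card_eq hcardA
  have hC'top : ∀ c' ∈ C', ∀ i ∈ Ns, c' ∈ ApprovalSet (R i) := by
    intro c' hc' i hi
    have := hC'sub hc'
    rw [Set.Finite.mem_toFinset] at this
    simp only [hA, Set.mem_iInter] at this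
    exact this i hi
  have hsolid : GenSolidCoalition R Ns C' := by
    intro i hi c' hc' c _
    exact hC'top c' hc' i hi c
  have hq : (ℓ : ℝ) * ((Fintype.card V : ℝ) / (k : ℝ)) ≤ (Ns.card : ℝ) := by
    rw [mul_div_assoc] at hcard; exact hcard
  obtain ⟨C'', hC''W, hC''card, hC''top⟩ :=
    hpsc ℓ hℓ Ns C' (le_of_eq hC'card) hsolid hq
  rw [hC'card, min_self] at hC''card
  have hC''in : (C'' : Set C) ⊆ (⋃ i ∈ Ns, ApprovalSet (R i)) ∩ (W : Set C) := by
    intro c hc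
    obtain ⟨i, hi, hwt⟩ := hC''top c hc
    refine ⟨?_, hC''W hc⟩
    have hcA : c ∈ ApprovalSet (R i) := by
      by_contra hnot
      -- every member of C' is strictly preferred to c by voter i
      have hsp : (C' : Set C) ⊆ {d : C | StrictPref (R i) d c} := by
        intro c' hc'
        have hc'A : c' ∈ ApprovalSet (R i) := hC'top c' hc' i hi
        refine ⟨hc'A c, ?_⟩
        intro hcc'
        apply hnot
        intro d
        exact (hR i).1.2 hcc' (hc'A d)
      have := Set.ncard_le_ncard hsp (Set.toFinite _)
      rw [Set.ncard_coe_finset, hC'card] at this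
      unfold WithinTop at hwt
      rw [hC'card] at hwt
      omega
    exact Set.mem_biUnion hi hcA
  have hle := Set.ncard_le_ncard hC''in (Set.toFinite _)
  rw [Set.ncard_coe_finset] at hle
  omega
end

section
/- Under dichotomous preferences, if a committee W of size k satisfies PJR for the approval sets (A_1,…,A_n) derived from the preferences, then W satisfies generalised Hare-PSC (generalised q-PSC with q = n/k). -/
variable {V C : Type*}

/-- under dichotomous preferences, PJR implies generalised Hare-PSC. -/
theorem PJR_implies_genHarePSC
    {V C : Type*} [Fintype V] [Fintype C] [DecidableEq C]
    (R : V → C → C → Prop) (hR : ∀ i : V, DichotomousPref (R i))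
    (k : ℕ) (hk1 : 1 ≤ k) (hkm : k ≤ Fintype.card C)
    (W : Finset C) (hW : W.card = k)
    (hpjr : PJR R W k) :
    GenQPSC R W ((Fintype.card V : ℝ) / (k : ℝ)) := by
  classical
  intro ℓ hℓ N' C' hsolid hle
  have hk0 : 0 < k := hk1
  have hkR : (0:ℝ) < (k:ℝ) := by exact_mod_cast hk0
  -- handle the case of no voters: PJR would fail
  rcases Nat.eq_zero_or_pos (Fintype.card V) with hn0 | hn
  · exfalso
    apply hpjr 1 one_pos hk1
    refine ⟨∅, ?_, ?_, ?_⟩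
    · simp [hn0]
    · have : (⋂ i ∈ (∅ : Finset V), ApprovalSet (R i)) = Set.univ := by simp
      rw [this, Set.ncard_univ, Nat.card_eq_fintype_card]
      exact le_trans hk1 hkm
    · simp
  have hnR : (0:ℝ) < (Fintype.card V : ℝ) := by exact_mod_cast hn
  -- ℓ ≤ k
  have hNn : (N'.card : ℝ) ≤ (Fintype.card V : ℝ) := by
    exact_mod_cast Finset.card_le_univ N'
  have hℓk : ℓ ≤ k := by
    have h1 : (ℓ:ℝ) * ((Fintype.card V : ℝ) / (k:ℝ)) ≤ (Fintype.card V : ℝ) :=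
      le_trans hle hNn
    rw [mul_div_assoc'] at h1
    rw [div_le_iff₀ hkR] at h1
    have h2 : (ℓ:ℝ) ≤ (k:ℝ) := by
      have := (mul_le_mul_iff_left₀ hnR).mp (by linarith [h1] : (ℓ:ℝ) * (Fintype.card V : ℝ) ≤ (k:ℝ) * (Fintype.card V : ℝ))
      exact this
    exact_mod_cast h2
  set ℓ' := min ℓ C'.card with hℓ'def
  have hℓ'k : ℓ' ≤ k := le_trans (min_le_left _ _) hℓk
  rcases Nat.eq_zero_or_pos ℓ' with h0 | hpos
  · exact ⟨∅, by simp, by simp [← hℓ'def, h0], by simp⟩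
  have hC'pos : 0 < C'.card := lt_of_lt_of_le hpos (min_le_right _ _)
  -- any strictly preferred candidate lies in the approval set
  have htop : ∀ (i : V) (d c : C), StrictPref (R i) d c → d ∈ ApprovalSet (R i) := by
    intro i d c hdc e
    by_contra hde
    have hed : R i e d := ((hR i).1.1 d e).resolve_left hde
    exact (hR i).2 e d c ⟨hed, hde⟩ hdc
  by_cases hcase : ∃ i ∈ N', ApprovalSet (R i) ⊂ (↑C' : Set C)
  · obtain ⟨i₀, hi₀, hss⟩ := hcase
    have hlt : (ApprovalSet (R i₀)).ncard < C'.card := by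
      have h := Set.ncard_lt_ncard hss (Set.toFinite _)
      rwa [Set.ncard_coe_finset] at h
    obtain ⟨C'', hC''W, hC''card⟩ := Finset.exists_subset_card_eq (s := W) (n := ℓ') (hW ▸ hℓ'k)
    refine ⟨C'', hC''W, le_of_eq hC''card.symm, ?_⟩
    intro c _
    refine ⟨i₀, hi₀, ?_⟩
    have hsubA : {d : C | StrictPref (R i₀) d c} ⊆ ApprovalSet (R i₀) :=
      fun d hd => htop i₀ d c hd
    exact lt_of_le_of_lt (Set.ncard_le_ncard hsubA (Set.toFinite _)) hlt
  · push_neg at hcase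
    have hsub : ∀ i ∈ N', (↑C' : Set C) ⊆ ApprovalSet (R i) := by
      intro i hi
      by_contra hnsub
      have hAC : ¬ (ApprovalSet (R i) ⊆ (↑C' : Set C)) := by
        intro hAsub
        exact hcase i hi ⟨hAsub, hnsub⟩
      obtain ⟨c, hcA, hcC'⟩ := Set.not_subset.mp hAC
      apply hnsub
      intro c' hc'
      simp only [Finset.mem_coe] at hc'
      intro d
      have h1 : R i c' c := hsolid i hi c' hc' c (by simpa using hcC')
      exact (hR i).1.2 h1 (hcA d)
    have hP2 : ℓ' ≤ (⋂ i ∈ N', ApprovalSet (R i)).ncard := by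
      rcases Finset.eq_empty_or_nonempty N' with rfl | hN'
      · have : (⋂ i ∈ (∅ : Finset V), ApprovalSet (R i)) = Set.univ := by simp
        rw [this, Set.ncard_univ, Nat.card_eq_fintype_card]
        exact le_trans hℓ'k hkm
      · have hsub2 : (↑C' : Set C) ⊆ ⋂ i ∈ N', ApprovalSet (R i) :=
          Set.subset_iInter₂ hsub
        have := Set.ncard_le_ncard hsub2 (Set.toFinite _)
        rw [Set.ncard_coe_finset] at this
        exact le_trans (min_le_right _ _) this
    have hP1 : (ℓ' : ℝ) * (Fintype.card V : ℝ) / (k : ℝ) ≤ (N'.card : ℝ) := by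
      have hle' : (ℓ' : ℝ) ≤ (ℓ : ℝ) := by exact_mod_cast min_le_left ℓ C'.card
      have : (ℓ' : ℝ) * (Fintype.card V : ℝ) / (k : ℝ)
          ≤ (ℓ : ℝ) * ((Fintype.card V : ℝ) / (k : ℝ)) := by
        rw [mul_div_assoc]
        gcongr
      exact le_trans this hle
    have hkey : ℓ' ≤ ((⋃ i ∈ N', ApprovalSet (R i)) ∩ (W : Set C)).ncard := by
      by_contra hcon
      push_neg at hcon
      exact hpjr ℓ' hpos hℓ'k ⟨N', hP1, hP2, hcon⟩
    set S := W.filter (fun c => c ∈ ⋃ i ∈ N', ApprovalSet (R i)) with hSdef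
    have hSeq : ((⋃ i ∈ N', ApprovalSet (R i)) ∩ (W : Set C)) = (↑S : Set C) := by
      ext c
      simp only [hSdef, Set.mem_inter_iff, Finset.coe_filter, Set.mem_setOf_eq,
        Finset.mem_coe]
      tauto
    refine ⟨S, Finset.filter_subset _ _, ?_, ?_⟩
    · rw [hSeq, Set.ncard_coe_finset] at hkey
      exact hkey
    · intro c hc
      rw [hSdef, Finset.mem_filter] at hc
      obtain ⟨-, hcU⟩ := hc
      simp only [Set.mem_iUnion] at hcU
      obtain ⟨i, hi, hci⟩ := hcU
      refine ⟨i, hi, ?_⟩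
      have hempty : {d : C | StrictPref (R i) d c} = ∅ := by
        ext d
        simp only [Set.mem_setOf_eq, Set.mem_empty_iff_false, iff_false]
        intro hdc
        exact hdc.2 (hci d)
      show ({d : C | StrictPref (R i) d c}).ncard < C'.card
      rw [hempty]
      simpa using hC'pos
end

section
/- Under dichotomous preferences, for a committee W of size k the following three properties are equivalent: W satisfies PJR for the approval sets derived from the preferences; W satisfies generalised Hare-PSC (generalised q-PSC with q = n/k); and W satisfies generalised weak Hare-PSC (generalised weak q-PSC with q = n/k). -/
variable {V C : Type*}

section Aux

variable {C : Type*} {R : C → C → Prop}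

lemma strict_empty_of_approved {c : C} (hc : c ∈ ApprovalSet R) :
    {d : C | StrictPref R d c} = ∅ := by
  ext d
  simp only [Set.mem_setOf_eq, Set.mem_empty_iff_false, iff_false]
  exact fun hd => hd.2 (hc d)

lemma strict_subset_approval (h : DichotomousPref R) (c : C) :
    {d : C | StrictPref R d c} ⊆ ApprovalSet R := by
  intro d hd e
  by_contra he
  exact h.2 e d c ⟨(h.1.1 d e).resolve_left he, he⟩ hd

lemma approval_subset_strict (h : DichotomousPref R) {c : C}
    (hc : c ∉ ApprovalSet R) :
    ApprovalSet R ⊆ {d : C | StrictPref R d c} := by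
  intro d hd
  exact ⟨hd c, fun hcd => hc fun x => h.1.2 hcd (hd x)⟩

lemma coalition_dichotomy (h : DichotomousPref R) {C' : Finset C}
    (hsc : ∀ c' ∈ C', ∀ c : C, c ∉ C' → R c' c) :
    ApprovalSet R ⊆ ↑C' ∨ ↑C' ⊆ ApprovalSet R := by
  by_cases hA : ∀ c ∈ ApprovalSet R, c ∈ C'
  · exact Or.inl hA
  · push_neg at hA
    obtain ⟨c, hcA, hcC⟩ := hA
    refine Or.inr fun c' hc' d => ?_
    exact h.1.2 (hsc c' hc' c hcC) (hcA d)

end Aux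

/-- under dichotomous preferences, PJR, generalised Hare-PSC and
generalised weak Hare-PSC are all equivalent. -/
theorem PJR_genHarePSC_genWeakHarePSC_equiv
    {V C : Type*} [Fintype V] [Fintype C] [DecidableEq C]
    (R : V → C → C → Prop) (hR : ∀ i : V, DichotomousPref (R i))
    (k : ℕ) (hk1 : 1 ≤ k) (hkm : k ≤ Fintype.card C)
    (W : Finset C) (hW : W.card = k) :
    (PJR R W k ↔ GenQPSC R W ((Fintype.card V : ℝ) / (k : ℝ))) ∧
    (PJR R W k ↔ GenWeakQPSC R W ((Fintype.card V : ℝ) / (k : ℝ))) := by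
  classical
  set n := Fintype.card V with hn
  have hk0 : (0:ℝ) < (k:ℝ) := by exact_mod_cast hk1
  -- PJR → GenQPSC
  have h1 : PJR R W k → GenQPSC R W ((n:ℝ) / (k:ℝ)) := by
    intro hPJR
    rcases Nat.eq_zero_or_pos n with hn0 | hnpos
    · -- PJR is false when there are no voters
      exfalso
      apply hPJR 1 one_pos hk1
      refine ⟨∅, ?_, ?_, ?_⟩
      · rw [← hn, hn0]; simp
      · simp only [Finset.notMem_empty, Set.iInter_of_empty, Set.iInter_univ]
        rw [Set.ncard_univ, Nat.card_eq_fintype_card]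
        exact hk1.trans hkm
      · simp
    · intro ℓ hℓ N' C' hsolid hquota
      have hN'n : ((N'.card : ℝ)) ≤ (n : ℝ) := by
        exact_mod_cast Finset.card_le_univ N'
      have hℓk : ℓ ≤ k := by
        have h1 : (ℓ:ℝ) * ((n:ℝ)/(k:ℝ)) ≤ (n:ℝ) := hquota.trans hN'n
        have h2 : (k:ℝ) * ((n:ℝ)/(k:ℝ)) = (n:ℝ) := by
          field_simp
        have hnk : (0:ℝ) < (n:ℝ)/(k:ℝ) := by
          apply div_pos _ hk0
          exact_mod_cast hnpos
        have : (ℓ:ℝ) ≤ (k:ℝ) :=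
          le_of_mul_le_mul_right (h1.trans h2.ge) hnk
        exact_mod_cast this
      set t := min ℓ C'.card with ht
      rcases Nat.eq_zero_or_pos t with ht0 | htpos
      · exact ⟨∅, Finset.empty_subset W, by simp [← ht, ht0], by simp⟩
      have hC'pos : 0 < C'.card := lt_of_lt_of_le htpos (min_le_right _ _)
      by_cases hcase : ∃ i ∈ N', (ApprovalSet (R i)).ncard < C'.card
      · obtain ⟨i, hiN, hsmall⟩ := hcase
        obtain ⟨C'', hsub, hcard⟩ : ∃ C'' ⊆ W, C''.card = t := by
          apply Finset.exists_subset_card_eq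
          rw [hW]; exact (min_le_left _ _).trans hℓk
        refine ⟨C'', hsub, le_of_eq hcard.symm, fun c'' _ => ⟨i, hiN, ?_⟩⟩
        unfold WithinTop
        calc {d : C | StrictPref (R i) d c''}.ncard
            ≤ (ApprovalSet (R i)).ncard :=
              Set.ncard_le_ncard (strict_subset_approval (hR i) c'') (Set.toFinite _)
          _ < C'.card := hsmall
      · push_neg at hcase
        have hCsubA : ∀ i ∈ N', (↑C' : Set C) ⊆ ApprovalSet (R i) := by
          intro i hiN
          rcases coalition_dichotomy (hR i) (hsolid i hiN) with hAC | hCA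
          · have := Set.eq_of_subset_of_ncard_le hAC
              (by rw [Set.ncard_coe_finset]; exact hcase i hiN) (Set.toFinite _)
            rw [this]
          · exact hCA
        -- apply PJR with ℓ = t, N* = N'
        have hPJ := hPJR t htpos ((min_le_left _ _).trans hℓk)
        push_neg at hPJ
        have hquota' : (t:ℝ) * (n:ℝ) / (k:ℝ) ≤ (N'.card : ℝ) := by
          rw [mul_div_assoc]
          refine le_trans ?_ hquota
          apply mul_le_mul_of_nonneg_right _ (le_of_lt (div_pos (by exact_mod_cast hnpos) hk0))
          · exact_mod_cast min_le_left _ _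
        have hint : t ≤ (⋂ i ∈ N', ApprovalSet (R i)).ncard := by
          refine le_trans (min_le_right _ _) ?_
          rw [← Set.ncard_coe_finset C']
          refine Set.ncard_le_ncard ?_ (Set.toFinite _)
          exact Set.subset_iInter₂ hCsubA
        have hun := hPJ N' hquota' hint
        set U : Set C := ⋃ i ∈ N', ApprovalSet (R i) with hU
        refine ⟨W.filter (· ∈ U), Finset.filter_subset _ _, ?_, ?_⟩
        · have heq : (↑(W.filter (· ∈ U)) : Set C) = U ∩ ↑W := by
            ext c; simp [Finset.mem_filter, and_comm]
          calc t ≤ (U ∩ ↑W).ncard := hun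
            _ = (W.filter (· ∈ U)).card := by rw [← heq, Set.ncard_coe_finset]
        · intro c'' hc''
          obtain ⟨hcW, hcU⟩ := Finset.mem_filter.mp hc''
          simp only [hU, Set.mem_iUnion, exists_prop] at hcU
          obtain ⟨i, hiN, hci⟩ := hcU
          refine ⟨i, hiN, ?_⟩
          unfold WithinTop
          rw [strict_empty_of_approved hci]
          simpa using hC'pos
  -- GenQPSC → GenWeakQPSC
  have h2 : GenQPSC R W ((n:ℝ)/(k:ℝ)) → GenWeakQPSC R W ((n:ℝ)/(k:ℝ)) := by
    intro hG ℓ hℓ N' C' _ hsolid hquota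
    exact hG ℓ hℓ N' C' hsolid hquota
  -- GenWeakQPSC → PJR
  have h3 : GenWeakQPSC R W ((n:ℝ)/(k:ℝ)) → PJR R W k := by
    intro hGW ℓ hℓ hℓk ⟨Nstar, hquota, hint, hun⟩
    set X : Set C := ⋂ i ∈ Nstar, ApprovalSet (R i) with hX
    have hXfin : X.Finite := Set.toFinite _
    obtain ⟨C', hC'sub, hC'card⟩ : ∃ C' ⊆ hXfin.toFinset, C'.card = ℓ := by
      apply Finset.exists_subset_card_eq
      rw [← Set.ncard_eq_toFinset_card X hXfin]
      exact hint
    have hC'X : (↑C' : Set C) ⊆ X := fun c hc => hXfin.mem_toFinset.mp (hC'sub hc)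
    have hsolid : GenSolidCoalition R Nstar C' := by
      intro i hi c' hc' c _
      have : c' ∈ ApprovalSet (R i) := by
        have := hC'X hc'
        rw [hX] at this
        exact Set.mem_iInter₂.mp this i hi
      exact this c
    have hquota' : (ℓ:ℝ) * ((n:ℝ)/(k:ℝ)) ≤ (Nstar.card : ℝ) := by
      rw [← mul_div_assoc]; exact hquota
    obtain ⟨C'', hC''W, hC''card, hC''top⟩ :=
      hGW ℓ hℓ Nstar C' (le_of_eq hC'card) hsolid hquota'
    rw [hC'card, min_self] at hC''card
    have hsub : (↑C'' : Set C) ⊆ (⋃ i ∈ Nstar, ApprovalSet (R i)) ∩ ↑W := by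
      intro c hc
      obtain ⟨i, hiN, htop⟩ := hC''top c hc
      constructor
      · simp only [Set.mem_iUnion, exists_prop]
        refine ⟨i, hiN, ?_⟩
        by_contra hcA
        unfold WithinTop at htop
        rw [hC'card] at htop
        have hXA : X ⊆ ApprovalSet (R i) := Set.biInter_subset_of_mem hiN
        have : ℓ ≤ {d : C | StrictPref (R i) d c}.ncard := by
          calc ℓ ≤ X.ncard := hint
            _ ≤ (ApprovalSet (R i)).ncard := Set.ncard_le_ncard hXA (Set.toFinite _)
            _ ≤ _ := Set.ncard_le_ncard (approval_subset_strict (hR i) hcA) (Set.toFinite _)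
        omega
      · exact hC''W hc
    have : ℓ ≤ ((⋃ i ∈ Nstar, ApprovalSet (R i)) ∩ ↑W).ncard := by
      calc ℓ ≤ C''.card := hC''card
        _ = (↑C'' : Set C).ncard := (Set.ncard_coe_finset _).symm
        _ ≤ _ := Set.ncard_le_ncard hsub (Set.toFinite _)
    omega
  exact ⟨⟨h1, fun h => h3 (h2 h)⟩, ⟨fun h => h2 (h1 h), h3⟩⟩
end

section
/- For every profile of total preorders of n voters over m candidates and every k with 1 ≤ k ≤ m, there exists a committee W ⊆ C with |W| = k that satisfies generalised Droop-PSC: for every positive integer ℓ and every generalised solid coalition N' supporting a set C' with |N'| > ℓ·n/(k+1), there exists C'' ⊆ W with |C''| ≥ min{ℓ, |C'|} such that every c'' ∈ C'' is within voter i's top |C'| for some i ∈ N'. -/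
set_option linter.unusedSectionVars false
set_option linter.unusedVariables false



variable {V C : Type*}

/-- `W` satisfies generalised Droop-PSC. -/
def GenDroopPSC [Fintype V] (R : V → C → C → Prop) (W : Finset C) (k : ℕ) : Prop :=
  ∀ ℓ : ℕ, 0 < ℓ → ∀ N' : Finset V, ∀ C' : Finset C,
    GenSolidCoalition R N' C' →
    (ℓ : ℝ) * (Fintype.card V : ℝ) / ((k : ℝ) + 1) < (N'.card : ℝ) →
    ∃ C'' : Finset C, C'' ⊆ W ∧ min ℓ C'.card ≤ C''.card ∧
      ∀ c'' ∈ C'', ∃ i ∈ N', WithinTop (R i) c'' C'.card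

section EAR

open scoped Classical

variable [Fintype V] [Fintype C] [DecidableEq C]

/-- Total budget of voters who rank `c` within their top `j`. -/
noncomputable def EARsupp (R : V → C → C → Prop) (b : V → ℝ) (j : ℕ) (c : C) : ℝ :=
  ∑ i, if WithinTop (R i) c j then b i else 0

/-- Budgets after electing `c` at stage `j`, deducting total `q` proportionally. -/
noncomputable def EARnext (R : V → C → C → Prop) (q : ℝ) (j : ℕ) (c : C)
    (b : V → ℝ) : V → ℝ :=
  fun i => if WithinTop (R i) c j then b i * (1 - q / EARsupp R b j c) else b i

/-- One step of the expanding approvals rule at stage `j`. -/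
noncomputable def EARstep (R : V → C → C → Prop) (q : ℝ) (j : ℕ)
    (s : Finset C × (V → ℝ)) : Finset C × (V → ℝ) :=
  if h : ∃ c, c ∉ s.1 ∧ q < EARsupp R s.2 j c then
    (insert h.choose s.1, EARnext R q j h.choose s.2)
  else s

noncomputable def EARloop (R : V → C → C → Prop) (q : ℝ) (j : ℕ) :
    ℕ → Finset C × (V → ℝ) → Finset C × (V → ℝ)
  | 0, s => s
  | (f+1), s => EARloop R q j f (EARstep R q j s)

noncomputable def EARrun (R : V → C → C → Prop) (q : ℝ) : ℕ → Finset C × (V → ℝ)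
  | 0 => (∅, fun _ => (1:ℝ))
  | (j+1) => EARloop R q (j+1) (Fintype.card C) (EARrun R q j)

variable {R : V → C → C → Prop} {q : ℝ}

lemma withinTop_mono {r : C → C → Prop} {c : C} {j t : ℕ} (hjt : j ≤ t)
    (h : WithinTop r c j) : WithinTop r c t :=
  lt_of_lt_of_le h hjt

/-- Every member of `C'` is within the top `|C'|` of every coalition voter. -/
lemma solid_withinTop {N' : Finset V} {C' : Finset C}
    (hsol : GenSolidCoalition R N' C') {i : V} (hi : i ∈ N')
    {c' : C} (hc' : c' ∈ C') : WithinTop (R i) c' C'.card := by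
  have hsub : {d : C | StrictPref (R i) d c'} ⊆ (↑(C'.erase c') : Set C) := by
    intro d hd
    rcases hd with ⟨hd1, hd2⟩
    have hdC' : d ∈ C' := by
      by_contra hdn
      exact hd2 (hsol i hi c' hc' d hdn)
    have hne : d ≠ c' := by
      rintro rfl; exact hd2 hd1
    exact Finset.mem_coe.2 (Finset.mem_erase.2 ⟨hne, hdC'⟩)
  have h1 : ({d : C | StrictPref (R i) d c'}).ncard ≤ (C'.erase c').card := by
    have h := Set.ncard_le_ncard hsub (Finset.finite_toSet _)
    rwa [Set.ncard_coe_finset] at h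
  have h2 : (C'.erase c').card < C'.card :=
    Finset.card_erase_lt_of_mem hc'
  exact lt_of_le_of_lt h1 h2

lemma EARsupp_nonneg {b : V → ℝ} (hb : ∀ i, 0 ≤ b i) (j : ℕ) (c : C) :
    0 ≤ EARsupp R b j c := by
  apply Finset.sum_nonneg
  intro i _
  by_cases h : WithinTop (R i) c j <;> simp [h, hb i]

/-- Coalition budget is a lower bound on the support of a commonly approved candidate. -/
lemma sum_le_EARsupp {b : V → ℝ} (hb : ∀ i, 0 ≤ b i) {N' : Finset V} {j : ℕ} {c : C}
    (happ : ∀ i ∈ N', WithinTop (R i) c j) :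
    ∑ i ∈ N', b i ≤ EARsupp R b j c := by
  have : ∑ i ∈ N', b i = ∑ i : V, if i ∈ N' then b i else 0 := by
    rw [Finset.sum_ite_mem]
    simp
  rw [this]
  apply Finset.sum_le_sum
  intro i _
  by_cases hi : i ∈ N'
  · simp [hi, happ i hi]
  · by_cases h : WithinTop (R i) c j <;> simp [hi, h, hb i]

section next

variable {b : V → ℝ} {j : ℕ} {c : C}

lemma EARnext_le (hq : 0 ≤ q) (hb : ∀ i, 0 ≤ b i) (hS : q < EARsupp R b j c) (i : V) :
    EARnext R q j c b i ≤ b i := by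
  unfold EARnext
  by_cases h : WithinTop (R i) c j
  · simp only [h, if_true]
    have hSpos : 0 < EARsupp R b j c := lt_of_le_of_lt hq hS
    have h1 : 1 - q / EARsupp R b j c ≤ 1 := by
      have : 0 ≤ q / EARsupp R b j c := div_nonneg hq hSpos.le
      linarith
    calc b i * (1 - q / EARsupp R b j c) ≤ b i * 1 :=
          mul_le_mul_of_nonneg_left h1 (hb i)
      _ = b i := mul_one _
  · simp [h]

lemma EARnext_nonneg (hq : 0 ≤ q) (hb : ∀ i, 0 ≤ b i) (hS : q < EARsupp R b j c) (i : V) :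
    0 ≤ EARnext R q j c b i := by
  unfold EARnext
  by_cases h : WithinTop (R i) c j
  · simp only [h, if_true]
    have hSpos : 0 < EARsupp R b j c := lt_of_le_of_lt hq hS
    have h1 : 0 ≤ 1 - q / EARsupp R b j c := by
      have : q / EARsupp R b j c ≤ 1 := div_le_one_of_le₀ hS.le hSpos.le
      linarith
    exact mul_nonneg (hb i) h1
  · simpa [h] using hb i

lemma EARnext_diff (hq : 0 ≤ q) (hS : q < EARsupp R b j c) (i : V) :
    b i - EARnext R q j c b i
      = (if WithinTop (R i) c j then b i else 0) * (q / EARsupp R b j c) := by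
  unfold EARnext
  by_cases h : WithinTop (R i) c j <;> simp [h] <;> ring

/-- Each election removes exactly `q` of total budget. -/
lemma EARnext_sum (hq : 0 ≤ q) (hS : q < EARsupp R b j c) :
    ∑ i, EARnext R q j c b i = (∑ i, b i) - q := by
  have hSpos : 0 < EARsupp R b j c := lt_of_le_of_lt hq hS
  have h1 : ∑ i, (b i - EARnext R q j c b i)
      = (∑ i, if WithinTop (R i) c j then b i else 0) * (q / EARsupp R b j c) := by
    rw [Finset.sum_mul]
    exact Finset.sum_congr rfl fun i _ => EARnext_diff hq hS i
  have h2 : ∑ i, (b i - EARnext R q j c b i) = q := by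
    rw [h1]
    show EARsupp R b j c * (q / EARsupp R b j c) = q
    field_simp
  have h3 : ∑ i, (b i - EARnext R q j c b i) = (∑ i, b i) - ∑ i, EARnext R q j c b i :=
    Finset.sum_sub_distrib _ _
  linarith [h2, h3.symm]

/-- Each election removes at most `q` from any group of voters. -/
lemma EARnext_sum_ge (hq : 0 ≤ q) (hb : ∀ i, 0 ≤ b i) (hS : q < EARsupp R b j c)
    (T : Finset V) :
    (∑ i ∈ T, b i) - q ≤ ∑ i ∈ T, EARnext R q j c b i := by
  have hterm : ∀ i, 0 ≤ b i - EARnext R q j c b i := by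
    intro i
    rw [EARnext_diff hq hS i]
    have hSpos : 0 < EARsupp R b j c := lt_of_le_of_lt hq hS
    apply mul_nonneg _ (div_nonneg hq hSpos.le)
    by_cases h : WithinTop (R i) c j <;> simp [h, hb i]
  have h1 : ∑ i ∈ T, (b i - EARnext R q j c b i) ≤ ∑ i, (b i - EARnext R q j c b i) := by
    apply Finset.sum_le_sum_of_subset_of_nonneg (Finset.subset_univ T)
    intro i _ _; exact hterm i
  have h2 : ∑ i, (b i - EARnext R q j c b i) = q := by
    have := EARnext_sum (R := R) hq hS
    have h3 : ∑ i, (b i - EARnext R q j c b i) = (∑ i, b i) - ∑ i, EARnext R q j c b i :=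
      Finset.sum_sub_distrib _ _
    linarith
  have h4 : ∑ i ∈ T, (b i - EARnext R q j c b i) = (∑ i ∈ T, b i) - ∑ i ∈ T, EARnext R q j c b i :=
    Finset.sum_sub_distrib _ _
  linarith

/-- Non-approvers' budgets are untouched. -/
lemma EARnext_eq_of_not_app {i : V} (h : ¬ WithinTop (R i) c j) :
    EARnext R q j c b i = b i := by
  simp [EARnext, h]

end next

/-- Case analysis for a single EAR step. -/
lemma EARstep_spec (R : V → C → C → Prop) (q : ℝ) (j : ℕ) (s : Finset C × (V → ℝ)) :
    ((¬ ∃ c, c ∉ s.1 ∧ q < EARsupp R s.2 j c) ∧ EARstep R q j s = s) ∨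
    ∃ c, c ∉ s.1 ∧ q < EARsupp R s.2 j c ∧
      EARstep R q j s = (insert c s.1, EARnext R q j c s.2) := by
  unfold EARstep
  split_ifs with h
  · exact Or.inr ⟨h.choose, h.choose_spec.1, h.choose_spec.2, rfl⟩
  · exact Or.inl ⟨h, rfl⟩

/-- The master invariant: nonnegative budgets, exact budget accounting,
committee size bound, and (relative to coalition data) coalition budget accounting. -/
def EARinv (R : V → C → C → Prop) (q : ℝ) (k : ℕ) (N' : Finset V) (A : Finset C)
    (s : Finset C × (V → ℝ)) : Prop :=
  (∀ i, 0 ≤ s.2 i) ∧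
  ((s.1.card : ℝ) * q + ∑ i, s.2 i = (Fintype.card V : ℝ)) ∧
  s.1.card ≤ k ∧
  ((N'.card : ℝ) - q * ((s.1 ∩ A).card : ℝ) ≤ ∑ i ∈ N', s.2 i)

lemma EARstep_inv {k : ℕ} {N' : Finset V} {t : ℕ} {j : ℕ}
    (hq : 0 < q) (hn : (Fintype.card V : ℝ) = ((k : ℝ) + 1) * q) (hjt : j ≤ t)
    {s : Finset C × (V → ℝ)}
    (hinv : EARinv R q k N' (Finset.univ.filter fun c => ∃ i ∈ N', WithinTop (R i) c t) s) :
    EARinv R q k N' (Finset.univ.filter fun c => ∃ i ∈ N', WithinTop (R i) c t)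
      (EARstep R q j s) ∧ s.1 ⊆ (EARstep R q j s).1 := by
  set A := Finset.univ.filter fun c => ∃ i ∈ N', WithinTop (R i) c t with hA
  obtain ⟨hb, hsum, hcard, hN⟩ := hinv
  rcases EARstep_spec R q j s with ⟨-, heq⟩ | ⟨c, hcW, hS, heq⟩
  · rw [heq]; exact ⟨⟨hb, hsum, hcard, hN⟩, Finset.Subset.refl _⟩
  · rw [heq]
    have hb' : ∀ i, 0 ≤ EARnext R q j c s.2 i := EARnext_nonneg hq.le hb hS
    have hsum' : ∑ i, EARnext R q j c s.2 i = (∑ i, s.2 i) - q := EARnext_sum hq.le hS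
    -- card bound: support ≤ total budget, so election implies card < k
    have hsupp_le : EARsupp R s.2 j c ≤ ∑ i, s.2 i := by
      apply Finset.sum_le_sum
      intro i _
      by_cases h : WithinTop (R i) c j <;> simp [h, hb i]
    have hcard' : (insert c s.1).card = s.1.card + 1 := Finset.card_insert_of_notMem hcW
    have hklt : s.1.card < k := by
      have h1 : q < ∑ i, s.2 i := lt_of_lt_of_le hS hsupp_le
      have h2 : (s.1.card : ℝ) * q + q < ((k : ℝ) + 1) * q := by
        rw [← hn, ← hsum]; linarith
      have h3 : ((s.1.card : ℝ) + 1) * q < ((k : ℝ) + 1) * q := by ring_nf; ring_nf at h2; linarith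
      have h4 : (s.1.card : ℝ) + 1 < (k : ℝ) + 1 := lt_of_mul_lt_mul_right h3 hq.le
      exact_mod_cast (by linarith : (s.1.card : ℝ) < (k : ℝ))
    refine ⟨⟨hb', ?_, ?_, ?_⟩, Finset.subset_insert _ _⟩
    · rw [hcard', hsum']
      push_cast
      linarith
    · rw [hcard']; omega
    · -- coalition budget accounting
      by_cases hcA : c ∈ A
      · have hins : insert c s.1 ∩ A = insert c (s.1 ∩ A) := by
          ext x
          simp only [Finset.mem_inter, Finset.mem_insert]
          constructor
          · rintro ⟨rfl | hx, hxA⟩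
            · exact Or.inl rfl
            · exact Or.inr ⟨hx, hxA⟩
          · rintro (rfl | ⟨hx, hxA⟩)
            · exact ⟨Or.inl rfl, hcA⟩
            · exact ⟨Or.inr hx, hxA⟩
        have h1 : ((insert c s.1 ∩ A).card : ℝ) = ((s.1 ∩ A).card : ℝ) + 1 := by
          rw [hins, Finset.card_insert_of_notMem (fun hx => hcW (Finset.mem_inter.1 hx).1)]
          push_cast; ring
        have h2 := EARnext_sum_ge (R := R) hq.le hb hS N'
        have h3 : q * (((s.1 ∩ A).card : ℝ) + 1) = q * ((s.1 ∩ A).card : ℝ) + q := by ring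
        rw [h1, h3]
        linarith
      · -- c ∉ A: no coalition member approves c at stage j, budgets unchanged on N'
        have hnoapp : ∀ i ∈ N', ¬ WithinTop (R i) c j := by
          intro i hi happ
          exact hcA (Finset.mem_filter.2 ⟨Finset.mem_univ _,
            ⟨i, hi, withinTop_mono hjt happ⟩⟩)
        have h1 : ∑ i ∈ N', EARnext R q j c s.2 i = ∑ i ∈ N', s.2 i :=
          Finset.sum_congr rfl fun i hi => EARnext_eq_of_not_app (hnoapp i hi)
        have h2 : insert c s.1 ∩ A = s.1 ∩ A := by
          ext x
          simp only [Finset.mem_inter, Finset.mem_insert]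
          constructor
          · rintro ⟨rfl | hx, hxA⟩
            · exact absurd hxA hcA
            · exact ⟨hx, hxA⟩
          · rintro ⟨hx, hxA⟩; exact ⟨Or.inr hx, hxA⟩
        rw [h1, h2]
        exact hN

lemma EARloop_inv {k : ℕ} {N' : Finset V} {t j : ℕ}
    (hq : 0 < q) (hn : (Fintype.card V : ℝ) = ((k : ℝ) + 1) * q) (hjt : j ≤ t)
    (f : ℕ) {s : Finset C × (V → ℝ)}
    (hinv : EARinv R q k N' (Finset.univ.filter fun c => ∃ i ∈ N', WithinTop (R i) c t) s) :
    EARinv R q k N' (Finset.univ.filter fun c => ∃ i ∈ N', WithinTop (R i) c t)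
      (EARloop R q j f s) ∧ s.1 ⊆ (EARloop R q j f s).1 := by
  induction f generalizing s with
  | zero => exact ⟨hinv, Finset.Subset.refl _⟩
  | succ f ih =>
    obtain ⟨h1, h2⟩ := EARstep_inv hq hn hjt hinv
    obtain ⟨h3, h4⟩ := ih h1
    exact ⟨h3, Finset.Subset.trans h2 h4⟩

lemma EARstep_of_stuck {j : ℕ} {s : Finset C × (V → ℝ)}
    (h : ¬ ∃ c, c ∉ s.1 ∧ q < EARsupp R s.2 j c) : EARstep R q j s = s := by
  unfold EARstep
  simp [h]

lemma EARloop_of_stuck {j : ℕ} (f : ℕ) {s : Finset C × (V → ℝ)}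
    (h : ¬ ∃ c, c ∉ s.1 ∧ q < EARsupp R s.2 j c) : EARloop R q j f s = s := by
  induction f with
  | zero => rfl
  | succ f ih => rw [EARloop, EARstep_of_stuck h, ih]

/-- After a loop with enough fuel, no candidate is electable at that stage. -/
lemma EARloop_post (j : ℕ) (f : ℕ) (s : Finset C × (V → ℝ))
    (hf : Fintype.card C ≤ f + s.1.card) :
    ¬ ∃ c, c ∉ (EARloop R q j f s).1 ∧ q < EARsupp R (EARloop R q j f s).2 j c := by
  induction f generalizing s with
  | zero =>
    rintro ⟨c, hc, -⟩
    exact hc (by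
      have : s.1 = Finset.univ := Finset.eq_univ_of_card _
        (le_antisymm (Finset.card_le_univ _) (by simpa using hf))
      simp [EARloop, this])
  | succ f ih =>
    rcases EARstep_spec R q j s with ⟨hno, heq⟩ | ⟨c, hcW, hS, heq⟩
    · rw [show EARloop R q j (f+1) s = EARloop R q j f (EARstep R q j s) from rfl, heq,
        EARloop_of_stuck f hno]
      exact hno
    · rw [show EARloop R q j (f+1) s = EARloop R q j f (EARstep R q j s) from rfl, heq]
      apply ih
      rw [Finset.card_insert_of_notMem hcW]
      omega

lemma EARrun_inv {k : ℕ} {N' : Finset V} {t : ℕ}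
    (hq : 0 < q) (hn : (Fintype.card V : ℝ) = ((k : ℝ) + 1) * q)
    (j : ℕ) (hjt : j ≤ t) :
    EARinv R q k N' (Finset.univ.filter fun c => ∃ i ∈ N', WithinTop (R i) c t)
      (EARrun R q j) := by
  induction j with
  | zero =>
    unfold EARrun
    refine ⟨fun i => zero_le_one, by simp, by simp, by simp [Finset.sum_const]⟩
  | succ j ih =>
    exact (EARloop_inv hq hn hjt (Fintype.card C) (ih (le_of_lt (Nat.lt_of_succ_le hjt)))).1

lemma EARrun_mono (j j' : ℕ) (hq : 0 < q)
    (hn : ∃ k : ℕ, (Fintype.card V : ℝ) = ((k : ℝ) + 1) * q) (hjj' : j ≤ j') :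
    (EARrun R q j).1 ⊆ (EARrun (C := C) R q j').1 := by
  induction j' with
  | zero =>
    obtain rfl := Nat.le_zero.1 hjj'
    exact Finset.Subset.refl _
  | succ j' ih =>
    rcases Nat.lt_or_ge j (j'+1) with h | h
    · obtain ⟨k, hk⟩ := hn
      have h1 : (EARrun R q j).1 ⊆ (EARrun (C := C) R q j').1 := ih (Nat.lt_succ_iff.1 h)
      have h2 := (EARloop_inv (R := R) (N' := (∅ : Finset V)) (t := j'+1)
        hq hk (le_refl (j'+1)) (Fintype.card C)
        (EARrun_inv (N' := (∅ : Finset V)) hq hk j' (Nat.le_succ j'))).2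
      exact Finset.Subset.trans h1 h2
    · have : j = j' + 1 := le_antisymm hjj' h
      rw [this]

end EAR

/-- for every profile of total preorders there exists a size-k
committee satisfying generalised Droop-PSC. -/
theorem exists_committee_genDroopPSC
    {V C : Type*} [Fintype V] [Fintype C] [DecidableEq C]
    (R : V → C → C → Prop) (hR : ∀ i : V, TotalPreorderRel (R i))
    (k : ℕ) (hk1 : 1 ≤ k) (hkm : k ≤ Fintype.card C) :
    ∃ W : Finset C, W.card = k ∧ GenDroopPSC R W k := by
  classical
  have hkC : k ≤ (Finset.univ : Finset C).card := by simpa [Finset.card_univ] using hkm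
  rcases Nat.eq_zero_or_pos (Fintype.card V) with hn0 | hn0
  · -- no voters: any committee of size k works vacuously
    obtain ⟨W, -, -, hWcard⟩ := Finset.exists_subsuperset_card_eq
      (Finset.empty_subset (Finset.univ : Finset C)) (by simp) hkC
    refine ⟨W, hWcard, ?_⟩
    intro ℓ hℓ N' C' hsol hquota
    exfalso
    have h1 : N'.card = 0 := by
      have h2 : N'.card ≤ Fintype.card V := by simpa using Finset.card_le_univ N'
      omega
    rw [h1, hn0] at hquota
    norm_num at hquota
  · -- main case: run the expanding approvals rule
    set q : ℝ := (Fintype.card V : ℝ) / ((k : ℝ) + 1) with hqdef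
    have hk1pos : (0:ℝ) < (k : ℝ) + 1 := by positivity
    have hq : 0 < q := div_pos (by exact_mod_cast hn0) hk1pos
    have hkq : (Fintype.card V : ℝ) = ((k : ℝ) + 1) * q := by
      rw [hqdef]; field_simp
    set m := Fintype.card C with hmdef
    set Wel := (EARrun (C := C) R q m).1 with hWeldef
    have hWelcard : Wel.card ≤ k :=
      (EARrun_inv (R := R) (N' := (∅ : Finset V)) hq hkq m le_rfl).2.2.1
    obtain ⟨W, hWelW, -, hWcard⟩ := Finset.exists_subsuperset_card_eq
      (Finset.subset_univ Wel) hWelcard hkC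
    refine ⟨W, hWcard, ?_⟩
    intro ℓ hℓ N' C' hsol hquota
    have hquota' : (ℓ : ℝ) * q < (N'.card : ℝ) := by
      rw [hqdef, ← mul_div_assoc]
      exact hquota
    have hN'pos : 0 < N'.card := by
      have h0 : (0:ℝ) ≤ (ℓ : ℝ) * q := mul_nonneg (by positivity) hq.le
      have : (0:ℝ) < (N'.card : ℝ) := lt_of_le_of_lt h0 hquota'
      exact_mod_cast this
    obtain ⟨i0, hi0⟩ := Finset.card_pos.1 hN'pos
    rcases C'.eq_empty_or_nonempty with rfl | hC'ne
    · exact ⟨∅, Finset.empty_subset _, by simp, by simp⟩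
    · set t := C'.card with htdef
      have ht1 : 1 ≤ t := Finset.card_pos.2 hC'ne
      have htm : t ≤ m := by
        rw [hmdef, ← Finset.card_univ]
        exact Finset.card_le_univ C'
      set A := Finset.univ.filter (fun c => ∃ i ∈ N', WithinTop (R i) c t) with hAdef
      set st := EARrun (C := C) R q t with hstdef
      obtain ⟨hb, hsum, hcard, hNbud⟩ :=
        EARrun_inv (R := R) (N' := N') (t := t) hq hkq t le_rfl
      have hmono : st.1 ⊆ Wel := EARrun_mono t m hq ⟨k, hkq⟩ htm
      by_cases hC'W : C' ⊆ st.1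
      · refine ⟨C', fun x hx => hWelW (hmono (hC'W hx)), min_le_right _ _, ?_⟩
        intro c'' hc''
        exact ⟨i0, hi0, solid_withinTop hsol hi0 hc''⟩
      · obtain ⟨c', hc'C', hc'not⟩ := Finset.not_subset.1 hC'W
        have hpost : ¬ ∃ c, c ∉ st.1 ∧ q < EARsupp R st.2 t c := by
          obtain ⟨t', ht'⟩ : ∃ t', t = t' + 1 := ⟨t - 1, by omega⟩
          rw [hstdef, ht']
          have hrun : EARrun (C := C) R q (t' + 1)
              = EARloop R q (t' + 1) (Fintype.card C) (EARrun R q t') := rfl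
          rw [hrun]
          exact EARloop_post (t' + 1) (Fintype.card C) (EARrun R q t') (by omega)
        have hsupple : EARsupp R st.2 t c' ≤ q :=
          not_lt.1 fun h => hpost ⟨c', hc'not, h⟩
        have happ : ∀ i ∈ N', WithinTop (R i) c' t :=
          fun i hi => solid_withinTop hsol hi hc'C'
        have h1 : ∑ i ∈ N', st.2 i ≤ q :=
          le_trans (sum_le_EARsupp hb happ) hsupple
        have h3 : (ℓ : ℝ) < ((st.1 ∩ A).card : ℝ) + 1 := by
          by_contra h
          push_neg at h
          have h5 := mul_le_mul_of_nonneg_right h hq.le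
          nlinarith [hNbud, hquota', h1]
        have h4 : ℓ ≤ (st.1 ∩ A).card := by
          have : ℓ < (st.1 ∩ A).card + 1 := by exact_mod_cast h3
          omega
        refine ⟨st.1 ∩ A, ?_, le_trans (min_le_left _ _) h4, ?_⟩
        · intro x hx
          exact hWelW (hmono (Finset.mem_inter.1 hx).1)
        · intro c'' hc''
          have h6 := (Finset.mem_inter.1 hc'').2
          rw [hAdef] at h6
          exact (Finset.mem_filter.1 h6).2
end

section
/- For every profile of linear orders of n voters over m candidates, every k with 1 ≤ k ≤ m, and every real number q with n/(k+1) < q ≤ n/k, there exists a committee W ⊆ C with |W| = k that satisfies q-PSC. -/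
variable {V C : Type*}

section Aux

open Finset

open Classical in
/-- Total remaining weight of voters who rank `c` within their top `j` positions. -/
noncomputable def suppW [Fintype V] (R : V → C → C → Prop) (w : V → ℝ) (c : C) (j : ℕ) : ℝ :=
  ∑ i : V, if WithinTop (R i) c j then w i else 0

lemma strictPref_irrefl (r : C → C → Prop) (c : C) : ¬ StrictPref r c c :=
  fun h => h.2 h.1

/-- Every candidate is within everybody's top `|C|` positions. -/
lemma withinTop_card [Fintype C] (r : C → C → Prop) (c : C) :
    WithinTop r c (Fintype.card C) := by
  have hss : {d : C | StrictPref r d c} ⊂ Set.univ := by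
    rw [Set.ssubset_univ_iff]
    intro h
    have hc : c ∈ {d : C | StrictPref r d c} := by rw [h]; exact Set.mem_univ c
    exact strictPref_irrefl r c hc
  have := Set.ncard_lt_ncard hss (Set.finite_univ)
  rwa [Set.ncard_univ, Nat.card_eq_fintype_card] at this

/-- Members of a solidly supported set `C'` are within a supporter's top `|C'|`. -/
lemma withinTop_of_solid [DecidableEq C] {R : V → C → C → Prop} {N' : Finset V}
    {C' : Finset C} (hs : SolidCoalition R N' C') {i : V} (hi : i ∈ N')
    {c' : C} (hc' : c' ∈ C') : WithinTop (R i) c' C'.card := by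
  have hsub : {d : C | StrictPref (R i) d c'} ⊆ (C'.erase c' : Finset C) := by
    intro d hd
    simp only [Set.mem_setOf_eq] at hd
    have hdC : d ∈ C' := by
      by_contra hdC
      exact hd.2 (hs i hi c' hc' d hdC).1
    have hne : d ≠ c' := by
      rintro rfl; exact strictPref_irrefl (R i) d hd
    exact Finset.mem_coe.mpr (Finset.mem_erase.mpr ⟨hne, hdC⟩)
  have h1 : ({d : C | StrictPref (R i) d c'}).ncard ≤ (C'.erase c' : Finset C).card := by
    have := Set.ncard_le_ncard hsub (Set.toFinite _)
    rwa [Set.ncard_coe_finset] at this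
  exact lt_of_le_of_lt h1 (Finset.card_erase_lt_of_mem hc')

/-- A candidate outside a solidly supported set `C'` is not within a
supporter's top `j` for any `j ≤ |C'|`. -/
lemma not_withinTop_of_solid [Fintype C] {R : V → C → C → Prop} {N' : Finset V}
    {C' : Finset C} (hs : SolidCoalition R N' C') {i : V} (hi : i ∈ N')
    {c : C} (hc : c ∉ C') {j : ℕ} (hj : j ≤ C'.card) : ¬ WithinTop (R i) c j := by
  intro hw
  have hsub : (C' : Set C) ⊆ {d : C | StrictPref (R i) d c} := by
    intro d hd
    exact hs i hi d hd c hc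
  have h1 : C'.card ≤ ({d : C | StrictPref (R i) d c}).ncard := by
    have := Set.ncard_le_ncard hsub (Set.toFinite _)
    rwa [Set.ncard_coe_finset] at this
  exact absurd hw (by unfold WithinTop; omega)

lemma qpsc_master {V C : Type*} [Fintype V] [Fintype C] [DecidableEq C]
    (R : V → C → C → Prop)
    (k : ℕ) (hk1 : 1 ≤ k) (hkm : k ≤ Fintype.card C) (q : ℝ)
    (hq0 : 0 < q) (hnlt : (Fintype.card V : ℝ) < ((k : ℝ) + 1) * q)
    (hkq : (k : ℝ) * q ≤ (Fintype.card V : ℝ)) :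
    ∀ d : ℕ, ∀ W : Finset C, ∀ w : V → ℝ,
      W.card + d = k → (∀ i, 0 ≤ w i) →
      (∑ i, w i) = (Fintype.card V : ℝ) - (W.card : ℝ) * q →
      ∃ Wf : Finset C, W ⊆ Wf ∧ Wf.card = k ∧
        ∀ ℓ : ℕ, 0 < ℓ → ∀ N' : Finset V, ∀ C' : Finset C,
          SolidCoalition R N' C' → (ℓ : ℝ) * q ≤ (N'.card : ℝ) →
          (((ℓ : ℝ) - ((W ∩ C').card : ℝ)) * q ≤ ∑ i ∈ N', w i ∨
            min ℓ C'.card ≤ (W ∩ C').card) →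
          min ℓ C'.card ≤ (Wf ∩ C').card := by
  classical
  intro d
  induction d with
  | zero =>
    intro W w hcard hw hsum
    rw [Nat.add_zero] at hcard
    refine ⟨W, subset_rfl, hcard, ?_⟩
    intro ℓ hℓ N' C' hsolid hNq hinv
    by_contra hlt
    push_neg at hlt
    rcases hinv with hinv | hdone
    · -- weight bound gives a contradiction
      have ht1 : (W ∩ C').card + 1 ≤ ℓ := by
        have := min_le_left ℓ C'.card
        omega
      have h1 : (1 : ℝ) ≤ (ℓ : ℝ) - ((W ∩ C').card : ℝ) := by
        have : ((W ∩ C').card : ℝ) + 1 ≤ (ℓ : ℝ) := by exact_mod_cast ht1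
        linarith
      have h2 : q ≤ ((ℓ : ℝ) - ((W ∩ C').card : ℝ)) * q := by
        nlinarith
      have h3 : (∑ i ∈ N', w i) ≤ ∑ i, w i :=
        Finset.sum_le_sum_of_subset_of_nonneg (Finset.subset_univ _)
          (fun i _ _ => hw i)
      have hWk : (W.card : ℝ) = (k : ℝ) := by exact_mod_cast congrArg Nat.cast hcard
      nlinarith
    · exact absurd hdone (by omega)
  | succ d ih =>
    intro W w hcard hw hsum
    have hWlt : W.card < k := by omega
    -- total weight is at least q
    have hT : q ≤ ∑ i, w i := by
      have hWk : (W.card : ℝ) + 1 ≤ (k : ℝ) := by exact_mod_cast hWlt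
      nlinarith
    -- every candidate reaches quota at rank |C|
    have hexists : ∀ c : C, ∃ j, q ≤ suppW R w c j := by
      intro c
      refine ⟨Fintype.card C, ?_⟩
      have : suppW R w c (Fintype.card C) = ∑ i, w i := by
        unfold suppW
        refine Finset.sum_congr rfl fun i _ => ?_
        rw [if_pos (withinTop_card (R i) c)]
      rw [this]; exact hT
    set jval : C → ℕ := fun c => Nat.find (hexists c) with hjval
    -- a candidate outside W exists
    have hne : (Finset.univ \ W).Nonempty := by
      rw [Finset.sdiff_nonempty]
      intro hsub
      have := Finset.card_le_card hsub
      rw [Finset.card_univ] at this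
      omega
    obtain ⟨cs, hcs, hcsmin⟩ := Finset.exists_min_image (Finset.univ \ W) jval hne
    have hcsW : cs ∉ W := (Finset.mem_sdiff.mp hcs).2
    set js : ℕ := jval cs with hjs
    have hsupp : q ≤ suppW R w cs js := Nat.find_spec (hexists cs)
    have hminle : ∀ c, c ∉ W → ∀ j, q ≤ suppW R w c j → js ≤ j := by
      intro c hc j hj
      have h1 : js ≤ jval c := hcsmin c (Finset.mem_sdiff.mpr ⟨Finset.mem_univ c, hc⟩)
      exact h1.trans (Nat.find_le hj)
    set σ : ℝ := suppW R w cs js with hσ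
    have hσq : q ≤ σ := hsupp
    have hσ0 : 0 < σ := lt_of_lt_of_le hq0 hσq
    have hfac : 0 ≤ 1 - q / σ := by
      have : q / σ ≤ 1 := (div_le_one hσ0).mpr hσq
      linarith
    set w' : V → ℝ := fun i => if WithinTop (R i) cs js then w i * (1 - q / σ) else w i
      with hw'def
    have hw' : ∀ i, 0 ≤ w' i := by
      intro i
      simp only [hw'def]
      split
      · exact mul_nonneg (hw i) hfac
      · exact hw i
    have hptw : ∀ i, w' i = w i - (q / σ) * (if WithinTop (R i) cs js then w i else 0) := by
      intro i
      simp only [hw'def]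
      split
      · ring
      · ring
    have hsumind : (∑ i : V, (if WithinTop (R i) cs js then w i else 0)) = σ := rfl
    have hsum' : (∑ i, w' i) = (∑ i, w i) - q := by
      calc (∑ i, w' i)
          = ∑ i, (w i - (q / σ) * (if WithinTop (R i) cs js then w i else 0)) :=
            Finset.sum_congr rfl fun i _ => hptw i
        _ = (∑ i, w i) - (q / σ) * ∑ i, (if WithinTop (R i) cs js then w i else 0) := by
            rw [Finset.sum_sub_distrib, Finset.mul_sum]
        _ = (∑ i, w i) - q := by rw [hsumind, div_mul_cancel₀ q (ne_of_gt hσ0)]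
    set W' : Finset C := insert cs W with hW'
    have hW'card : W'.card = W.card + 1 := Finset.card_insert_of_notMem hcsW
    obtain ⟨Wf, hWf1, hWf2, hWf3⟩ := ih W' w' (by omega)
      hw' (by rw [hsum', hsum, hW'card]; push_cast; ring)
    refine ⟨Wf, (Finset.subset_insert cs W).trans hWf1, hWf2, ?_⟩
    intro ℓ hℓ N' C' hsolid hNq hinv
    refine hWf3 ℓ hℓ N' C' hsolid hNq ?_
    have htle : (W ∩ C').card ≤ (W' ∩ C').card :=
      Finset.card_le_card (Finset.inter_subset_inter (Finset.subset_insert cs W) subset_rfl)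
    rcases hinv with hinv | hdone
    · by_cases hmin2 : min ℓ C'.card ≤ (W ∩ C').card
      · exact Or.inr (hmin2.trans htle)
      push_neg at hmin2
      -- the weight of N' is at least q
      have ht1 : (W ∩ C').card + 1 ≤ ℓ := by
        have := min_le_left ℓ C'.card
        omega
      have h1 : (1 : ℝ) ≤ (ℓ : ℝ) - ((W ∩ C').card : ℝ) := by
        have : ((W ∩ C').card : ℝ) + 1 ≤ (ℓ : ℝ) := by exact_mod_cast ht1
        linarith
      have hwN : q ≤ ∑ i ∈ N', w i := by nlinarith
      -- a candidate of C' outside W exists, and it reaches quota at rank |C'|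
      have htC : (W ∩ C').card < C'.card := by
        have := min_le_right ℓ C'.card
        omega
      have hc'ex : ∃ c' ∈ C', c' ∉ W := by
        by_contra h
        push_neg at h
        have : C' ⊆ W ∩ C' := Finset.subset_inter (fun x hx => h x hx) subset_rfl
        have := Finset.card_le_card this
        omega
      obtain ⟨c', hc'C, hc'W⟩ := hc'ex
      have hsuppc' : q ≤ suppW R w c' C'.card := by
        have hstep : (∑ i ∈ N', w i) ≤ suppW R w c' C'.card := by
          unfold suppW
          have h1 : (∑ i ∈ N', w i) =
              ∑ i ∈ N', (if WithinTop (R i) c' C'.card then w i else 0) := by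
            refine Finset.sum_congr rfl fun i hi => ?_
            rw [if_pos (withinTop_of_solid hsolid hi hc'C)]
          rw [h1]
          refine Finset.sum_le_sum_of_subset_of_nonneg (Finset.subset_univ _) ?_
          intro i _ _
          split
          · exact hw i
          · exact le_rfl
        linarith
      have hjsle : js ≤ C'.card := hminle c' hc'W _ hsuppc'
      by_cases hcsC : cs ∈ C'
      · -- selected candidate is in C'
        left
        have hW'int : W' ∩ C' = insert cs (W ∩ C') := by
          rw [hW', Finset.insert_inter_of_mem hcsC]
        have hcsWC : cs ∉ W ∩ C' := fun h => hcsW (Finset.mem_inter.mp h).1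
        have ht' : (W' ∩ C').card = (W ∩ C').card + 1 := by
          rw [hW'int, Finset.card_insert_of_notMem hcsWC]
        -- weight of N' decreases by at most q
        have hindle : (∑ i ∈ N', (if WithinTop (R i) cs js then w i else 0)) ≤ σ := by
          rw [← hsumind]
          refine Finset.sum_le_sum_of_subset_of_nonneg (Finset.subset_univ _) ?_
          intro i _ _
          split
          · exact hw i
          · exact le_rfl
        have hsumN' : (∑ i ∈ N', w i) - q ≤ ∑ i ∈ N', w' i := by
          have hcalc : (∑ i ∈ N', w' i) =
              (∑ i ∈ N', w i) -
                (q / σ) * ∑ i ∈ N', (if WithinTop (R i) cs js then w i else 0) := by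
            calc (∑ i ∈ N', w' i)
                = ∑ i ∈ N', (w i - (q / σ) * (if WithinTop (R i) cs js then w i else 0)) :=
                  Finset.sum_congr rfl fun i _ => hptw i
              _ = _ := by rw [Finset.sum_sub_distrib, Finset.mul_sum]
          have hqσ : 0 ≤ q / σ := div_nonneg hq0.le hσ0.le
          have h2 : (q / σ) * (∑ i ∈ N', (if WithinTop (R i) cs js then w i else 0)) ≤
              (q / σ) * σ := mul_le_mul_of_nonneg_left hindle hqσ
          rw [div_mul_cancel₀ q (ne_of_gt hσ0)] at h2
          linarith
        rw [ht']
        push_cast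
        linarith
      · -- selected candidate is outside C': weights of N' untouched
        left
        have hW'int : W' ∩ C' = W ∩ C' := by
          rw [hW', Finset.insert_inter_of_notMem hcsC]
        have hsame : (∑ i ∈ N', w' i) = ∑ i ∈ N', w i := by
          refine Finset.sum_congr rfl fun i hi => ?_
          simp only [hw'def]
          rw [if_neg (not_withinTop_of_solid hsolid hi hcsC hjsle)]
        rw [hW'int, hsame]
        exact hinv
    · exact Or.inr (hdone.trans htle)

end Aux

/-- for every profile of linear orders and every quota q with
n/(k+1) < q ≤ n/k, there exists a size-k committee satisfying q-PSC. -/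
theorem exists_committee_qPSC
    {V C : Type*} [Fintype V] [Fintype C] [DecidableEq C]
    (R : V → C → C → Prop) (hR : ∀ i : V, LinearPrefRel (R i))
    (k : ℕ) (hk1 : 1 ≤ k) (hkm : k ≤ Fintype.card C)
    (q : ℝ)
    (hql : (Fintype.card V : ℝ) / ((k : ℝ) + 1) < q)
    (hqu : q ≤ (Fintype.card V : ℝ) / (k : ℝ)) :
    ∃ W : Finset C, W.card = k ∧ QPSC R W q := by
  classical
  have hk0 : (0:ℝ) < (k : ℝ) := by exact_mod_cast hk1
  have hq0 : 0 < q :=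
    lt_of_le_of_lt (div_nonneg (Nat.cast_nonneg _) (by positivity)) hql
  have hnlt : (Fintype.card V : ℝ) < ((k : ℝ) + 1) * q := by
    rw [div_lt_iff₀ (by positivity)] at hql
    linarith
  have hkq : (k : ℝ) * q ≤ (Fintype.card V : ℝ) := by
    rw [le_div_iff₀ hk0] at hqu
    linarith
  obtain ⟨Wf, _, hWfcard, hWf⟩ := qpsc_master R k hk1 hkm q hq0 hnlt hkq k ∅ (fun _ => 1)
    (by simp) (fun _ => zero_le_one) (by simp)
  refine ⟨Wf, hWfcard, ?_⟩
  intro ℓ hℓ N' C' hsolid hNq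
  refine hWf ℓ hℓ N' C' hsolid hNq (Or.inl ?_)
  have h1 : (∑ _i ∈ N', (1:ℝ)) = (N'.card : ℝ) := by simp
  simp only [Finset.empty_inter, Finset.card_empty, Nat.cast_zero, sub_zero]
  rw [h1]
  exact hNq
end
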